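/- Assume in addition that the process is of scaled type with 1−F(t)=t^{−1}L(t) for some function L slowly varying at infinity (the case α=1). Then for every λ_0∈[a,b], Y_{t,λ_0}/t → 0 in probability and Z_{t,λ_0}/t → 0 in probability as t→∞. -/

import Mathlib

open MeasureTheory ProbabilityTheory Filter Set
open scoped ENNReal NNReal Topology

noncomputable section

/-- The cumulative distribution function of a measure on `ℝ`. -/
def cdfOf (μ : Measure ℝ) (t : ℝ) : ℝ := (μ (Set.Iic t)).toReal

/-- The Laplace transform `∫ e^{-z x} dμ(x)` of a measure on `ℝ`. -/
def laplaceOf (μ : Measure ℝ) (z : ℝ) : ℝ := ∫ x, Real.exp (-(z * x)) ∂μ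

/-- The mean of a measure supported on `[0,∞)`, with value in `ℝ≥0∞`. -/
def meanOf (μ : Measure ℝ) : ℝ≥0∞ := ∫⁻ x, ENNReal.ofReal x ∂μ

/-- A measure on `ℝ` is non-arithmetic if it is not concentrated on a lattice `d·ℤ`. -/
def NonArithmetic (μ : Measure ℝ) : Prop :=
  ¬ ∃ d : ℝ, 0 < d ∧ μ {x : ℝ | ∃ k : ℤ, x = k * d} = 1

/-- A positive function on `(0,∞)` is slowly varying at infinity if
`L(ct)/L(t) → 1` as `t → ∞` for every `c > 0`. -/
def SlowlyVarying (L : ℝ → ℝ) : Prop :=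
  (∀ t : ℝ, 0 < t → 0 < L t) ∧
    ∀ c : ℝ, 0 < c → Tendsto (fun t => L (c * t) / L t) atTop (𝓝 1)

/-- A bounded operator `T` on a Banach space has a spectral gap if its spectrum is bounded
away from the unit circle, except for the simple eigenvalue `1` and at most finitely many
further eigenvalues on the unit circle. -/
def HasSpectralGap {E : Type*} [NormedAddCommGroup E] [NormedSpace ℝ E] (T : E →L[ℝ] E) :
    Prop :=
  ∃ r : ℝ, r < 1 ∧ ∃ Sp : Finset ℝ, (∀ x ∈ Sp, |x| = 1) ∧ (1 : ℝ) ∈ Sp ∧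
    spectrum ℝ T ⊆ Metric.closedBall 0 r ∪ (Sp : Set ℝ) ∧
    Module.finrank ℝ (Module.End.eigenspace (T : E →ₗ[ℝ] E) 1) = 1

/-- A Markov renewal process: a Markov chain `Λ` on `[a,b]` with transition kernel `g`,
together with waiting times `X n` which, conditionally on the trajectory of the chain,
are independent with `X n` distributed according to `ν (Λ n)`.  `P lam` is the law of the
whole process when the chain is started from `Λ 0 = lam`. -/
structure MarkovRenewalProcess (Ω : Type) [MeasurableSpace Ω] where
  a : ℝ
  b : ℝ
  P : ℝ → Measure Ω
  g : Kernel ℝ ℝ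
  ν : Kernel ℝ ℝ
  Λ : ℕ → Ω → ℝ
  X : ℕ → Ω → ℝ
  hg : IsMarkovKernel g
  hν : IsMarkovKernel ν
  hν0 : ∀ lam ∈ Set.Icc a b, ν lam (Set.Iio 0) = 0
  hP : ∀ lam ∈ Set.Icc a b, IsProbabilityMeasure (P lam)
  hΛmeas : ∀ n, Measurable (Λ n)
  hXmeas : ∀ n, Measurable (X n)
  hΛ0 : ∀ lam ∈ Set.Icc a b, P lam {ω | Λ 0 ω = lam} = 1
  hΛrange : ∀ lam ∈ Set.Icc a b, ∀ n, P lam {ω | Λ n ω ∈ Set.Icc a b} = 1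
  hMarkov : ∀ lam ∈ Set.Icc a b, ∀ n : ℕ, ∀ A : Set ℝ, MeasurableSet A →
    ∀ B : Set Ω,
      MeasurableSet[MeasurableSpace.comap (fun ω => fun i : Fin (n + 1) => Λ i ω)
        MeasurableSpace.pi] B →
      P lam ({ω | Λ (n + 1) ω ∈ A} ∩ B) = ∫⁻ ω in B, g (Λ n ω) A ∂(P lam)
  hXcond : ∀ lam ∈ Set.Icc a b, ∀ n : ℕ, ∀ C : Fin n → Set ℝ, (∀ i, MeasurableSet (C i)) →
    ∀ B : Set Ω,
      MeasurableSet[MeasurableSpace.comap (fun ω => fun i : ℕ => Λ i ω)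
        MeasurableSpace.pi] B →
      P lam ({ω | ∀ i : Fin n, X i ω ∈ C i} ∩ B)
        = ∫⁻ ω in B, ∏ i : Fin n, ν (Λ i ω) (C i) ∂(P lam)

namespace MarkovRenewalProcess

variable {Ω : Type} [MeasurableSpace Ω] (M : MarkovRenewalProcess Ω)

/-- The renewal times `S n = X 0 + ⋯ + X (n-1)`, with `S 0 = 0`. -/
def S (n : ℕ) (ω : Ω) : ℝ := ∑ i ∈ Finset.range n, M.X i ω

/-- The number of renewals up to time `t` (including the one at time `0`):
`N t = inf {n | S n > t}`. -/
def N (t : ℝ) (ω : Ω) : ℕ := sInf {n : ℕ | t < M.S n ω}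

/-- `U lam0 t A = 1_A(lam0) + ∑_{n ≥ 1} P(S n < t, Λ n ∈ A | Λ 0 = lam0)`,
the expected number of jumps into `A` before time `t` (plus `1` if started in `A`). -/
def U (lam0 : ℝ) (t : ℝ) (A : Set ℝ) : ℝ≥0∞ :=
  A.indicator (fun _ => (1 : ℝ≥0∞)) lam0 +
    ∑' n : ℕ, M.P lam0 {ω | M.S (n + 1) ω < t ∧ M.Λ (n + 1) ω ∈ A}

/-- The distribution of the parameter of the renewal interval ongoing at time `t`:
`Φ t lam0 A = P(Λ_{N_t - 1} ∈ A | Λ 0 = lam0)`. -/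
def Phi (t : ℝ) (lam0 : ℝ) (A : Set ℝ) : ℝ≥0∞ :=
  M.P lam0 {ω | M.Λ (M.N t ω - 1) ω ∈ A}

/-- The age (spent lifetime) at time `t`: the time since the last renewal before `t`. -/
def Yage (t : ℝ) (ω : Ω) : ℝ := t - M.S (M.N t ω - 1) ω

/-- The residual lifetime at time `t`: the time until the next renewal after `t`. -/
def Zres (t : ℝ) (ω : Ω) : ℝ := M.S (M.N t ω) ω - t

/-- The total lifetime at time `t`. -/
def Ctot (t : ℝ) (ω : Ω) : ℝ := M.Yage t ω + M.Zres t ω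

end MarkovRenewalProcess


lemma boxEq {n : ℕ} (μ1 μ2 : Measure (Fin n → ℝ)) [IsFiniteMeasure μ1] [IsFiniteMeasure μ2]
    (h : ∀ C : Fin n → Set ℝ, (∀ i, MeasurableSet (C i)) →
      μ1 (Set.pi univ C) = μ2 (Set.pi univ C)) : μ1 = μ2 := by
  refine ext_of_generate_finite _ generateFrom_pi.symm isPiSystem_pi ?_ ?_
  · rintro _ ⟨C, hC, rfl⟩
    exact h C fun i => hC i (mem_univ i)
  · have := h (fun _ => univ) (fun _ => MeasurableSet.univ)
    simpa using this


lemma countLem (x : ℕ → ℝ) (hx : ∀ i, 0 ≤ x i) (t : ℝ) (ht : 0 < t) (k : ℕ) (hk : 1 ≤ k)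
    (m : ℕ) :
    (t / k) * ∑ n ∈ Finset.range m, ∑ j ∈ Finset.Icc 1 (k - 1),
      (if (∑ i ∈ Finset.range n, x i) ≤ t ∧ (j : ℝ) * t / k < x n then (1:ℝ) else 0)
      ≤ 2 * t := by
  have hk0 : (0:ℝ) < k := by exact_mod_cast hk
  set s : ℕ → ℝ := fun n => ∑ i ∈ Finset.range n, x i with hs
  set T : Finset ℕ := (Finset.range m).filter (fun n => s n ≤ t) with hT
  set c : ℕ → ℕ := fun n => ((Finset.Icc 1 (k-1)).filter (fun j : ℕ => (j:ℝ)*t/k < x n)).card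
    with hc
  have hinner : ∀ n, (∑ j ∈ Finset.Icc 1 (k-1),
      (if s n ≤ t ∧ (j : ℝ) * t / k < x n then (1:ℝ) else 0))
      = if s n ≤ t then (c n : ℝ) else 0 := by
    intro n
    by_cases hn : s n ≤ t
    · simp only [hn, true_and, if_true, hc]
      rw [Finset.sum_boole]
    · simp [hn]
  have hsum : ∑ n ∈ Finset.range m, ∑ j ∈ Finset.Icc 1 (k - 1),
      (if s n ≤ t ∧ (j : ℝ) * t / k < x n then (1:ℝ) else 0)
      = ∑ n ∈ T, (c n : ℝ) := by
    rw [hT, Finset.sum_filter]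
    exact Finset.sum_congr rfl fun n _ => hinner n
  rw [hsum, Finset.mul_sum]
  have hterm : ∀ n, (t/k) * (c n : ℝ) ≤ min (x n) t := by
    intro n
    have hxk : (0:ℝ) ≤ x n * k / t := div_nonneg (mul_nonneg (hx n) hk0.le) ht.le
    have htk : (0:ℝ) < t / k := div_pos ht hk0
    have h1 : (c n : ℝ) ≤ x n * k / t := by
      have hsub : (Finset.Icc 1 (k-1)).filter (fun j : ℕ => (j:ℝ)*t/k < x n)
          ⊆ Finset.Icc 1 (Nat.floor (x n * k / t)) := by
        intro j hj
        simp only [Finset.mem_filter, Finset.mem_Icc] at hj ⊢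
        refine ⟨hj.1.1, Nat.le_floor ?_⟩
        rw [le_div_iff₀ ht]
        have h4 := (div_lt_iff₀ hk0).mp hj.2
        linarith
      have hcard : c n ≤ Nat.floor (x n * k / t) := by
        have h9 := Finset.card_le_card hsub
        simpa [Nat.card_Icc] using h9
      calc (c n : ℝ) ≤ (Nat.floor (x n * k / t) : ℝ) := by exact_mod_cast hcard
        _ ≤ x n * k / t := Nat.floor_le hxk
    have h2 : (c n : ℝ) ≤ k := by
      have h5 : c n ≤ (Finset.Icc 1 (k-1)).card := Finset.card_filter_le _ _
      have h3 : (Finset.Icc 1 (k-1)).card ≤ k := by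
        rw [Nat.card_Icc]; omega
      exact_mod_cast h5.trans h3
    refine le_min ?_ ?_
    · have h6 := mul_le_mul_of_nonneg_left h1 htk.le
      have heq : t/k * (x n * k / t) = x n := by field_simp
      linarith
    · have h6 := mul_le_mul_of_nonneg_left h2 htk.le
      have heq : t/(k:ℝ) * (k:ℝ) = t := by field_simp
      linarith
  have hfinal : ∑ n ∈ T, (t/k) * (c n : ℝ) ≤ 2 * t := by
    rcases Finset.eq_empty_or_nonempty T with hTe | hTne
    · rw [hTe]
      simp
      linarith
    · set M := T.max' hTne with hM
      have hMT : M ∈ T := T.max'_mem hTne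
      have hMst : s M ≤ t := by
        rw [hT] at hMT
        exact (Finset.mem_filter.mp hMT).2
      have hsplit : ∑ n ∈ T, (t/k) * (c n : ℝ)
          = (t/k) * (c M : ℝ) + ∑ n ∈ T.erase M, (t/k) * (c n : ℝ) :=
        (Finset.add_sum_erase T _ hMT).symm
      have herase : ∑ n ∈ T.erase M, (t/k) * (c n : ℝ) ≤ ∑ i ∈ Finset.range M, x i := by
        calc ∑ n ∈ T.erase M, (t/k) * (c n : ℝ) ≤ ∑ n ∈ T.erase M, x n := by
              apply Finset.sum_le_sum
              intro n _
              exact (hterm n).trans (min_le_left _ _)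
          _ ≤ ∑ i ∈ Finset.range M, x i := by
              apply Finset.sum_le_sum_of_subset_of_nonneg
              · intro n hn
                rw [Finset.mem_range]
                rcases Finset.mem_erase.mp hn with ⟨hne, hnT⟩
                exact lt_of_le_of_ne (T.le_max' n hnT) hne
              · intro i _ _; exact hx i
      have h6 : (t/k) * (c M : ℝ) ≤ t := (hterm M).trans (min_le_right _ _)
      have h7 : ∑ i ∈ Finset.range M, x i ≤ t := hMst
      linarith
  exact hfinal

namespace MarkovRenewalProcess
variable {Ω : Type} [MeasurableSpace Ω] (M : MarkovRenewalProcess Ω)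

lemma keyLemma (lam0 : ℝ) (hlam0 : lam0 ∈ Set.Icc M.a M.b) (n : ℕ) (u : ℝ)
    (A : Set (Fin n → ℝ)) (hA : MeasurableSet A) :
    M.P lam0 ((fun ω (i : Fin n) => M.X i ω) ⁻¹' A ∩ {ω | u < M.X n ω})
      = ∫⁻ ω in (fun ω (i : Fin n) => M.X i ω) ⁻¹' A,
          M.ν (M.Λ n ω) (Set.Ioi u) ∂(M.P lam0) := by
  haveI hPprob : IsProbabilityMeasure (M.P lam0) := M.hP lam0 hlam0
  haveI hνMk : IsMarkovKernel M.ν := M.hν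
  set P := M.P lam0 with hPdef
  set Xv : Ω → (Fin n → ℝ) := fun ω i => M.X i ω with hXvdef
  have hXv : Measurable Xv := measurable_pi_lambda _ fun i => M.hXmeas i
  set h : Ω → ℝ≥0∞ := fun ω => M.ν (M.Λ n ω) (Set.Ioi u) with hhdef
  have hh : Measurable h := (Kernel.measurable_coe M.ν measurableSet_Ioi).comp (M.hΛmeas n)
  have hXn : MeasurableSet {ω | u < M.X n ω} := measurableSet_lt measurable_const (M.hXmeas n)
  have hhint : ∫⁻ ω, h ω ∂P ≠ ⊤ := by
    refine ne_top_of_le_ne_top ?_ (lintegral_mono (fun ω => prob_le_one : h ≤ fun _ => 1))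
    simp
  haveI : IsFiniteMeasure (P.withDensity h) := isFiniteMeasure_withDensity hhint
  set μ1 : Measure (Fin n → ℝ) := Measure.map Xv (P.restrict {ω | u < M.X n ω}) with hμ1
  set μ2 : Measure (Fin n → ℝ) := Measure.map Xv (P.withDensity h) with hμ2
  haveI : IsFiniteMeasure μ1 := Measure.isFiniteMeasure_map _ _
  haveI : IsFiniteMeasure μ2 := Measure.isFiniteMeasure_map _ _
  have hμeq : μ1 = μ2 := by
    apply boxEq
    intro C hC
    set Xbox := {ω | ∀ i : Fin n, M.X i ω ∈ C i} with hXboxdef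
    have hXboxpre : Xv ⁻¹' (Set.pi univ C) = Xbox := by
      ext ω; simp [hXvdef, Set.mem_pi, hXboxdef]
    have hXboxmeas : MeasurableSet Xbox := by
      rw [← hXboxpre]; exact hXv (MeasurableSet.univ_pi hC)
    -- step 1 : (n+1)-dim identity
    set C' : Fin (n+1) → Set ℝ := Fin.snoc C (Set.Ioi u) with hC'
    have hC'meas : ∀ i, MeasurableSet (C' i) := by
      intro i
      induction i using Fin.lastCases with
      | last => simp [hC', Fin.snoc_last]
      | cast i => simpa [hC', Fin.snoc_castSucc] using hC i
    have hBuniv : MeasurableSet[MeasurableSpace.comap (fun ω => fun i : ℕ => M.Λ i ω)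
        MeasurableSpace.pi] (univ : Set Ω) := MeasurableSet.univ
    have H1 := M.hXcond lam0 hlam0 (n+1) C' hC'meas univ hBuniv
    rw [Set.inter_univ, Measure.restrict_univ] at H1
    have hsetEq : {ω | ∀ i : Fin (n+1), M.X i ω ∈ C' i} = Xbox ∩ {ω | u < M.X n ω} := by
      ext ω
      constructor
      · intro hω
        refine ⟨fun i => ?_, ?_⟩
        · have := hω i.castSucc
          simpa [hC', Fin.snoc_castSucc] using this
        · have := hω (Fin.last n)
          simpa [hC', Fin.snoc_last] using this
      · rintro ⟨h1, h2⟩ i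
        induction i using Fin.lastCases with
        | last => simpa [hC', Fin.snoc_last] using h2
        | cast i => simpa [hC', Fin.snoc_castSucc] using h1 i
    have hprodEq : ∀ ω, (∏ i : Fin (n+1), M.ν (M.Λ i ω) (C' i))
        = (∏ i : Fin n, M.ν (M.Λ i ω) (C i)) * h ω := by
      intro ω
      rw [Fin.prod_univ_castSucc]
      congr 1
      · exact Finset.prod_congr rfl fun i _ => by simp [hC', Fin.snoc_castSucc]
      · simp [hC', Fin.snoc_last, hhdef]
    rw [hsetEq] at H1
    have H1' : P (Xbox ∩ {ω | u < M.X n ω})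
        = ∫⁻ ω, (∏ i : Fin n, M.ν (M.Λ i ω) (C i)) * h ω ∂P := by
      rw [H1]; exact lintegral_congr hprodEq
    -- step 2 : conditioning on Λ n
    have hprodmeas : Measurable fun ω => ∏ i : Fin n, M.ν (M.Λ i ω) (C i) := by
      apply Finset.measurable_prod
      intro i _
      exact (Kernel.measurable_coe M.ν (hC i)).comp (M.hΛmeas i)
    have hprodle1 : ∀ ω, (∏ i : Fin n, M.ν (M.Λ i ω) (C i)) ≤ 1 := by
      intro ω
      calc (∏ i : Fin n, M.ν (M.Λ i ω) (C i)) ≤ ∏ _i : Fin n, (1:ℝ≥0∞) :=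
            Finset.prod_le_prod' fun i _ => prob_le_one
        _ = 1 := by simp
    have hprodint : ∫⁻ ω, (∏ i : Fin n, M.ν (M.Λ i ω) (C i)) ∂P ≠ ⊤ := by
      refine ne_top_of_le_ne_top ?_ (lintegral_mono hprodle1)
      simp
    haveI : IsFiniteMeasure (P.withDensity fun ω => ∏ i : Fin n, M.ν (M.Λ i ω) (C i)) :=
      isFiniteMeasure_withDensity hprodint
    set κ1 : Measure ℝ := Measure.map (M.Λ n) (P.restrict Xbox) with hκ1
    set κ2 : Measure ℝ := Measure.map (M.Λ n)
      (P.withDensity fun ω => ∏ i : Fin n, M.ν (M.Λ i ω) (C i)) with hκ2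
    have hκeq : κ1 = κ2 := by
      ext D hD
      rw [hκ1, hκ2, Measure.map_apply (M.hΛmeas n) hD, Measure.map_apply (M.hΛmeas n) hD,
        Measure.restrict_apply ((M.hΛmeas n) hD), withDensity_apply _ ((M.hΛmeas n) hD)]
      have hB : MeasurableSet[MeasurableSpace.comap (fun ω => fun i : ℕ => M.Λ i ω)
          MeasurableSpace.pi] (M.Λ n ⁻¹' D) := by
        refine ⟨{f : ℕ → ℝ | f n ∈ D}, measurable_pi_apply n hD, rfl⟩
      have H2 := M.hXcond lam0 hlam0 n C hC (M.Λ n ⁻¹' D) hB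
      rw [Set.inter_comm] at H2
      exact H2
    have e1 : ∫⁻ lam, M.ν lam (Set.Ioi u) ∂κ1 = ∫⁻ ω in Xbox, h ω ∂P := by
      rw [hκ1, lintegral_map (Kernel.measurable_coe M.ν measurableSet_Ioi) (M.hΛmeas n)]
    have e2 : ∫⁻ lam, M.ν lam (Set.Ioi u) ∂κ2
        = ∫⁻ ω, (∏ i : Fin n, M.ν (M.Λ i ω) (C i)) * h ω ∂P := by
      rw [hκ2, lintegral_map (Kernel.measurable_coe M.ν measurableSet_Ioi) (M.hΛmeas n),
        lintegral_withDensity_eq_lintegral_mul _ hprodmeas hh]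
      rfl
    -- assemble box identity
    have hμ1C : μ1 (Set.pi univ C) = P (Xbox ∩ {ω | u < M.X n ω}) := by
      rw [hμ1, Measure.map_apply hXv (MeasurableSet.univ_pi hC),
        Measure.restrict_apply (hXv (MeasurableSet.univ_pi hC)), hXboxpre]
    have hμ2C : μ2 (Set.pi univ C) = ∫⁻ ω in Xbox, h ω ∂P := by
      rw [hμ2, Measure.map_apply hXv (MeasurableSet.univ_pi hC),
        withDensity_apply _ (hXv (MeasurableSet.univ_pi hC)), hXboxpre]
    rw [hμ1C, hμ2C, H1', ← e2, ← hκeq, e1]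
  -- conclude
  have hμ1A : μ1 A = P ((fun ω (i : Fin n) => M.X i ω) ⁻¹' A ∩ {ω | u < M.X n ω}) := by
    rw [hμ1, Measure.map_apply hXv hA, Measure.restrict_apply (hXv hA)]
  have hμ2A : μ2 A = ∫⁻ ω in (fun ω (i : Fin n) => M.X i ω) ⁻¹' A, h ω ∂P := by
    rw [hμ2, Measure.map_apply hXv hA, withDensity_apply _ (hXv hA)]
  rw [← hμ1A, hμeq, hμ2A]

lemma aeLam (lam0 : ℝ) (hlam0 : lam0 ∈ Set.Icc M.a M.b) (n : ℕ) :
    ∀ᵐ ω ∂(M.P lam0), M.Λ n ω ∈ Set.Icc M.a M.b := by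
  haveI : IsProbabilityMeasure (M.P lam0) := M.hP lam0 hlam0
  have h1 := M.hΛrange lam0 hlam0 n
  have hm : MeasurableSet {ω | M.Λ n ω ∈ Set.Icc M.a M.b} := (M.hΛmeas n) measurableSet_Icc
  rw [Filter.eventually_iff, mem_ae_iff]
  have : {ω | M.Λ n ω ∈ Set.Icc M.a M.b}ᶜᶜ = {ω | M.Λ n ω ∈ Set.Icc M.a M.b} := compl_compl _
  rw [this] at *
  rw [prob_compl_eq_one_sub hm, h1]
  simp

lemma aeXnonneg (lam0 : ℝ) (hlam0 : lam0 ∈ Set.Icc M.a M.b) :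
    ∀ᵐ ω ∂(M.P lam0), ∀ i, 0 ≤ M.X i ω := by
  haveI : IsProbabilityMeasure (M.P lam0) := M.hP lam0 hlam0
  haveI : IsMarkovKernel M.ν := M.hν
  rw [ae_all_iff]
  intro i
  have hset : {ω | M.X i ω < 0} = {ω | ∀ j : Fin (i+1), M.X j ω ∈
      (Fin.snoc (fun _ : Fin i => (univ : Set ℝ)) (Set.Iio 0) : Fin (i+1) → Set ℝ) j} := by
    ext ω
    constructor
    · intro hω j
      induction j using Fin.lastCases with
      | last => simpa [Fin.snoc_last] using hω
      | cast j => simp [Fin.snoc_castSucc]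
    · intro hω
      have := hω (Fin.last i)
      simpa [Fin.snoc_last] using this
  have hmeasC : ∀ j : Fin (i+1), MeasurableSet
      ((Fin.snoc (fun _ : Fin i => (univ : Set ℝ)) (Set.Iio 0) : Fin (i+1) → Set ℝ) j) := by
    intro j
    induction j using Fin.lastCases with
    | last => simp [Fin.snoc_last]
    | cast j => simp [Fin.snoc_castSucc]
  have H := M.hXcond lam0 hlam0 (i+1) _ hmeasC univ MeasurableSet.univ
  rw [Set.inter_univ, Measure.restrict_univ] at H
  have hprod : ∀ ω, (∏ j : Fin (i+1), M.ν (M.Λ j ω)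
      ((Fin.snoc (fun _ : Fin i => (univ : Set ℝ)) (Set.Iio 0) : Fin (i+1) → Set ℝ) j))
      = M.ν (M.Λ i ω) (Set.Iio 0) := by
    intro ω
    rw [Fin.prod_univ_castSucc]
    have h1 : ∀ j : Fin i, M.ν (M.Λ (j.castSucc : ℕ) ω)
        ((Fin.snoc (fun _ : Fin i => (univ : Set ℝ)) (Set.Iio 0) : Fin (i+1) → Set ℝ)
          j.castSucc) = 1 := by
      intro j
      simp [Fin.snoc_castSucc]
    rw [Finset.prod_congr rfl (fun j _ => h1 j)]
    simp [Fin.snoc_last]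
  have hzero : ∫⁻ ω, M.ν (M.Λ i ω) (Set.Iio 0) ∂(M.P lam0) = 0 := by
    have hae : ∀ᵐ ω ∂(M.P lam0), M.ν (M.Λ i ω) (Set.Iio 0) = 0 := by
      filter_upwards [M.aeLam lam0 hlam0 i] with ω hω
      exact M.hν0 _ hω
    rw [lintegral_congr_ae hae]
    simp
  have hPzero : M.P lam0 {ω | M.X i ω < 0} = 0 := by
    rw [hset, H, lintegral_congr hprod, hzero]
  rw [Filter.eventually_iff, mem_ae_iff]
  have : {ω | 0 ≤ M.X i ω}ᶜ = {ω | M.X i ω < 0} := by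
    ext ω; simp [not_le]
  rw [this]
  exact hPzero

lemma nu_Ioi (μF : Measure ℝ) [IsProbabilityMeasure μF]
    (hscaled : ∀ lam ∈ Set.Icc M.a M.b, ∀ t : ℝ, M.ν lam (Set.Iic t) = μF (Set.Iic (lam * t)))
    (lam : ℝ) (hlam : lam ∈ Set.Icc M.a M.b) (u : ℝ) :
    M.ν lam (Set.Ioi u) = μF (Set.Ioi (lam * u)) := by
  haveI : IsMarkovKernel M.ν := M.hν
  rw [← Set.compl_Iic, ← Set.compl_Iic, prob_compl_eq_one_sub measurableSet_Iic,
    prob_compl_eq_one_sub measurableSet_Iic, hscaled lam hlam u]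

lemma measurable_S (n : ℕ) : Measurable (M.S n) := by
  unfold MarkovRenewalProcess.S
  exact Finset.measurable_sum _ fun i _ => M.hXmeas i

lemma Spre (n : ℕ) (s : ℝ) :
    (fun ω (i : Fin n) => M.X i ω) ⁻¹' {f : Fin n → ℝ | ∑ i, f i ≤ s}
      = {ω | M.S n ω ≤ s} := by
  ext ω
  simp only [Set.mem_preimage, Set.mem_setOf_eq, MarkovRenewalProcess.S]
  rw [Fin.sum_univ_eq_sum_range (fun i => M.X i ω) n]

lemma SnXn_upper (lam0 : ℝ) (hlam0 : lam0 ∈ Set.Icc M.a M.b)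
    (μF : Measure ℝ) [IsProbabilityMeasure μF]
    (hscaled : ∀ lam ∈ Set.Icc M.a M.b, ∀ t : ℝ, M.ν lam (Set.Iic t) = μF (Set.Iic (lam * t)))
    (n : ℕ) (s u : ℝ) (hu : 0 ≤ u) :
    M.P lam0 ({ω | M.S n ω ≤ s} ∩ {ω | u < M.X n ω})
      ≤ μF (Set.Ioi (M.a * u)) * M.P lam0 {ω | M.S n ω ≤ s} := by
  have hA : MeasurableSet {f : Fin n → ℝ | ∑ i, f i ≤ s} :=
    measurableSet_le (Finset.measurable_sum _ fun i _ => measurable_pi_apply i) measurable_const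
  have hkey := M.keyLemma lam0 hlam0 n u _ hA
  rw [M.Spre n s] at hkey
  rw [hkey]
  have hae : ∀ᵐ ω ∂(M.P lam0), M.ν (M.Λ n ω) (Set.Ioi u) ≤ μF (Set.Ioi (M.a * u)) := by
    filter_upwards [M.aeLam lam0 hlam0 n] with ω hω
    rw [M.nu_Ioi μF hscaled _ hω u]
    exact measure_mono (Set.Ioi_subset_Ioi (mul_le_mul_of_nonneg_right hω.1 hu))
  calc ∫⁻ ω in {ω | M.S n ω ≤ s}, M.ν (M.Λ n ω) (Set.Ioi u) ∂(M.P lam0)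
      ≤ ∫⁻ _ω in {ω | M.S n ω ≤ s}, μF (Set.Ioi (M.a * u)) ∂(M.P lam0) :=
        lintegral_mono_ae (ae_restrict_of_ae hae)
    _ = μF (Set.Ioi (M.a * u)) * M.P lam0 {ω | M.S n ω ≤ s} := by
        rw [setLIntegral_const]

lemma SnXn_lower (lam0 : ℝ) (hlam0 : lam0 ∈ Set.Icc M.a M.b)
    (μF : Measure ℝ) [IsProbabilityMeasure μF]
    (hscaled : ∀ lam ∈ Set.Icc M.a M.b, ∀ t : ℝ, M.ν lam (Set.Iic t) = μF (Set.Iic (lam * t)))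
    (n : ℕ) (s u : ℝ) (hu : 0 ≤ u) :
    μF (Set.Ioi (M.b * u)) * M.P lam0 {ω | M.S n ω ≤ s}
      ≤ M.P lam0 ({ω | M.S n ω ≤ s} ∩ {ω | u < M.X n ω}) := by
  have hA : MeasurableSet {f : Fin n → ℝ | ∑ i, f i ≤ s} :=
    measurableSet_le (Finset.measurable_sum _ fun i _ => measurable_pi_apply i) measurable_const
  have hkey := M.keyLemma lam0 hlam0 n u _ hA
  rw [M.Spre n s] at hkey
  rw [hkey]
  have hae : ∀ᵐ ω ∂(M.P lam0), μF (Set.Ioi (M.b * u)) ≤ M.ν (M.Λ n ω) (Set.Ioi u) := by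
    filter_upwards [M.aeLam lam0 hlam0 n] with ω hω
    rw [M.nu_Ioi μF hscaled _ hω u]
    exact measure_mono (Set.Ioi_subset_Ioi (mul_le_mul_of_nonneg_right hω.2 hu))
  calc μF (Set.Ioi (M.b * u)) * M.P lam0 {ω | M.S n ω ≤ s}
      = ∫⁻ _ω in {ω | M.S n ω ≤ s}, μF (Set.Ioi (M.b * u)) ∂(M.P lam0) := by
        rw [setLIntegral_const]
    _ ≤ ∫⁻ ω in {ω | M.S n ω ≤ s}, M.ν (M.Λ n ω) (Set.Ioi u) ∂(M.P lam0) :=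
        lintegral_mono_ae (ae_restrict_of_ae hae)

lemma waldBound (lam0 : ℝ) (hlam0 : lam0 ∈ Set.Icc M.a M.b)
    (μF : Measure ℝ) [IsProbabilityMeasure μF]
    (hscaled : ∀ lam ∈ Set.Icc M.a M.b, ∀ t : ℝ, M.ν lam (Set.Iic t) = μF (Set.Iic (lam * t)))
    (t : ℝ) (ht : 0 < t) (k : ℕ) (hk : 1 ≤ k) (m : ℕ) :
    (ENNReal.ofReal (t/k) * ∑ j ∈ Finset.Icc 1 (k-1), μF (Set.Ioi (M.b * ((j:ℝ)*t/k))))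
      * ∑ n ∈ Finset.range m, M.P lam0 {ω | M.S n ω ≤ t} ≤ ENNReal.ofReal (2*t) := by
  haveI : IsProbabilityMeasure (M.P lam0) := M.hP lam0 hlam0
  have hk0 : (0:ℝ) < (k:ℝ) := by exact_mod_cast hk
  have htk : (0:ℝ) ≤ t/k := le_of_lt (div_pos ht hk0)
  set c : ℝ≥0∞ := ENNReal.ofReal (t/k) with hc
  set D : ℕ → ℕ → Set Ω := fun n j => {ω | M.S n ω ≤ t} ∩ {ω | (j:ℝ)*t/k < M.X n ω} with hD
  have hDmeas : ∀ n j, MeasurableSet (D n j) := fun n j =>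
    ((M.measurable_S n) measurableSet_Iic).inter
      (measurableSet_lt measurable_const (M.hXmeas n))
  set G : Ω → ℝ≥0∞ := fun ω => ∑ n ∈ Finset.range m, ∑ j ∈ Finset.Icc 1 (k-1),
    (D n j).indicator (fun _ => c) ω with hG
  have hGint : ∫⁻ ω, G ω ∂(M.P lam0)
      = ∑ n ∈ Finset.range m, ∑ j ∈ Finset.Icc 1 (k-1), c * M.P lam0 (D n j) := by
    rw [hG, lintegral_finset_sum _ (fun n _ => Finset.measurable_sum _
      (fun j _ => (measurable_const.indicator (hDmeas n j))))]
    refine Finset.sum_congr rfl fun n _ => ?_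
    rw [lintegral_finset_sum _ (fun j _ => (measurable_const.indicator (hDmeas n j)))]
    refine Finset.sum_congr rfl fun j _ => ?_
    rw [lintegral_indicator (hDmeas n j), setLIntegral_const]
  have hGbound : ∀ᵐ ω ∂(M.P lam0), G ω ≤ ENNReal.ofReal (2*t) := by
    filter_upwards [M.aeXnonneg lam0 hlam0] with ω hω
    have hind : ∀ n j, (D n j).indicator (fun _ => c) ω
        = ENNReal.ofReal ((t/k) * (if (∑ i ∈ Finset.range n, M.X i ω) ≤ t
            ∧ (j:ℝ)*t/k < M.X n ω then (1:ℝ) else 0)) := by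
      intro n j
      by_cases hmem : ω ∈ D n j
      · have hcond : (∑ i ∈ Finset.range n, M.X i ω) ≤ t ∧ (j:ℝ)*t/k < M.X n ω := hmem
        rw [Set.indicator_of_mem hmem, if_pos hcond, mul_one]
      · have hcond : ¬ ((∑ i ∈ Finset.range n, M.X i ω) ≤ t ∧ (j:ℝ)*t/k < M.X n ω) := hmem
        rw [Set.indicator_of_notMem hmem, if_neg hcond, mul_zero, ENNReal.ofReal_zero]
    have hGω : G ω = ENNReal.ofReal ((t/k) * ∑ n ∈ Finset.range m, ∑ j ∈ Finset.Icc 1 (k-1),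
        (if (∑ i ∈ Finset.range n, M.X i ω) ≤ t ∧ (j:ℝ)*t/k < M.X n ω then (1:ℝ) else 0)) := by
      rw [hG]
      simp only [hind]
      rw [Finset.mul_sum]
      rw [ENNReal.ofReal_sum_of_nonneg (fun n _ => by positivity)]
      refine Finset.sum_congr rfl fun n _ => ?_
      rw [Finset.mul_sum, ENNReal.ofReal_sum_of_nonneg (fun j _ => by positivity)]
    rw [hGω]
    exact ENNReal.ofReal_le_ofReal (countLem (fun i => M.X i ω) hω t ht k hk m)
  have hGle : ∫⁻ ω, G ω ∂(M.P lam0) ≤ ENNReal.ofReal (2*t) := by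
    calc ∫⁻ ω, G ω ∂(M.P lam0) ≤ ∫⁻ _ω, ENNReal.ofReal (2*t) ∂(M.P lam0) :=
          lintegral_mono_ae hGbound
      _ = ENNReal.ofReal (2*t) := by simp
  refine le_trans ?_ (hGint ▸ hGle)
  have hre : (ENNReal.ofReal (t/k) * ∑ j ∈ Finset.Icc 1 (k-1),
        μF (Set.Ioi (M.b * ((j:ℝ)*t/k))))
      * ∑ n ∈ Finset.range m, M.P lam0 {ω | M.S n ω ≤ t}
      = ∑ n ∈ Finset.range m, ∑ j ∈ Finset.Icc 1 (k-1),
          c * μF (Set.Ioi (M.b * ((j:ℝ)*t/k))) * M.P lam0 {ω | M.S n ω ≤ t} := by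
    simp only [Finset.mul_sum, Finset.sum_mul, hc]
  rw [hre]
  refine Finset.sum_le_sum fun n _ => ?_
  refine Finset.sum_le_sum fun j _ => ?_
  have hjnn : (0:ℝ) ≤ (j:ℝ)*t/k := by positivity
  have hlow := M.SnXn_lower lam0 hlam0 μF hscaled n t ((j:ℝ)*t/k) hjnn
  calc c * μF (Set.Ioi (M.b * ((j:ℝ)*t/k))) * M.P lam0 {ω | M.S n ω ≤ t}
      = c * (μF (Set.Ioi (M.b * ((j:ℝ)*t/k))) * M.P lam0 {ω | M.S n ω ≤ t}) := mul_assoc _ _ _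
    _ ≤ c * M.P lam0 (D n j) := mul_le_mul_right hlow c

end MarkovRenewalProcess

/-- In the case `α = 1`, both `Y_t/t` and `Z_t/t` converge to `0` in
probability. -/
theorem age_and_residual_over_t_alpha_one
    {Ω : Type} [MeasurableSpace Ω] (M : MarkovRenewalProcess Ω)
    (h0a : 0 < M.a) (hab : M.a ≤ M.b)
    (hδ : ∃ δ > (0:ℝ), ∃ c < (1:ℝ), ∀ lam ∈ Set.Icc M.a M.b, cdfOf (M.ν lam) δ ≤ c)
    (hK : ∃ K > (0:ℝ), ∃ c > (0:ℝ), ∀ lam ∈ Set.Icc M.a M.b, c ≤ cdfOf (M.ν lam) K)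
    (μF : Measure ℝ) (hμFprob : IsProbabilityMeasure μF) (hμF0 : μF (Set.Iio 0) = 0)
    (hμFNA : NonArithmetic μF)
    (hscaled : ∀ lam ∈ Set.Icc M.a M.b, ∀ t : ℝ, M.ν lam (Set.Iic t) = μF (Set.Iic (lam * t)))
    (L : ℝ → ℝ) (hL : SlowlyVarying L)
    (htail : ∀ t : ℝ, 0 < t → 1 - cdfOf μF t = t ^ (-(1:ℝ)) * L t)
    (ρs : Measure ℝ) (hρsprob : IsProbabilityMeasure ρs)
    (hρssupp : ρs (Set.Icc M.a M.b)ᶜ = 0)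
    (hstat : Kernel.Invariant M.g ρs)
    (huniq : ∀ ρ' : Measure ℝ, IsProbabilityMeasure ρ' → ρ' (Set.Icc M.a M.b)ᶜ = 0 →
      Kernel.Invariant M.g ρ' → ρ' = ρs)
    (Pop : Lp ℝ ⊤ ρs →L[ℝ] Lp ℝ ⊤ ρs)
    (hPop : ∀ (f : ℝ → ℝ) (hf : MemLp f ⊤ ρs)
      (hPf : MemLp (fun lam => ∫ y, f y ∂(M.g lam)) ⊤ ρs),
      Pop (hf.toLp f) = hPf.toLp _)
    (hgap : HasSpectralGap Pop)
    (lam0 : ℝ) (hlam0 : lam0 ∈ Set.Icc M.a M.b) :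
    (∀ ε > (0:ℝ), Tendsto (fun t : ℝ =>
        (M.P lam0 {ω | ε < |M.Yage t ω / t|}).toReal) atTop (𝓝 0)) ∧
      ∀ ε > (0:ℝ), Tendsto (fun t : ℝ =>
        (M.P lam0 {ω | ε < |M.Zres t ω / t|}).toReal) atTop (𝓝 0) := by
  haveI hPp : IsProbabilityMeasure (M.P lam0) := M.hP lam0 hlam0
  haveI : IsProbabilityMeasure μF := hμFprob
  -- tail of μF expressed through L
  have hIoi_toReal : ∀ x : ℝ, (μF (Set.Ioi x)).toReal = 1 - cdfOf μF x := by
    intro x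
    rw [← Set.compl_Iic, prob_compl_eq_one_sub measurableSet_Iic,
      ENNReal.toReal_sub_of_le prob_le_one ENNReal.one_ne_top]
    rfl
  have hIoiL : ∀ x : ℝ, 0 < x → (μF (Set.Ioi x)).toReal = L x / x := by
    intro x hx
    rw [hIoi_toReal, htail x hx, Real.rpow_neg_one, inv_mul_eq_div]
  have hIoipos : ∀ x : ℝ, 0 < x → 0 < (μF (Set.Ioi x)).toReal := by
    intro x hx
    rw [hIoiL x hx]
    exact div_pos (hL.1 x hx) hx
  have h0b : 0 < M.b := lt_of_lt_of_le h0a hab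
  -- helper : tsum bound from partial sums
  have htsum_le : ∀ (f : ℕ → ℝ≥0∞) (c : ℝ≥0∞),
      (∀ m, ∑ n ∈ Finset.range m, f n ≤ c) → ∑' n, f n ≤ c := by
    intro f c h
    rw [ENNReal.tsum_eq_iSup_sum]
    refine iSup_le fun s => ?_
    obtain ⟨m, hm⟩ := s.exists_nat_subset_range
    exact (Finset.sum_le_sum_of_subset hm).trans (h m)
  -- master bound
  have master : ∀ ε : ℝ, 0 < ε → Tendsto (fun t : ℝ =>
      (M.P lam0 ((⋃ n, {ω | M.S n ω ≤ t} ∩ {ω | ε*t < M.X n ω})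
        ∪ {ω | ∀ n, M.S n ω ≤ t})).toReal) atTop (𝓝 0) := by
    intro ε hε
    set bad : ℝ → Set Ω := fun t => (⋃ n, {ω | M.S n ω ≤ t} ∩ {ω | ε*t < M.X n ω})
        ∪ {ω | ∀ n, M.S n ω ≤ t} with hbad
    set Hk : ℕ → ℝ := fun k => ∑ j ∈ Finset.Icc 1 (k-1), 1/(M.b * j) with hHk
    set ψ : ℕ → ℝ → ℝ := fun k t => (μF (Set.Ioi (M.a*(ε*t)))).toReal * (2*t)
        / ((t/k) * ∑ j ∈ Finset.Icc 1 (k-1), (μF (Set.Ioi (M.b * ((j:ℝ)*t/k)))).toReal)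
      with hψ
    -- step A : the per-k bound
    have boundA : ∀ k : ℕ, 2 ≤ k → ∀ t : ℝ, 0 < t →
        (M.P lam0 (bad t)).toReal ≤ ψ k t := by
      intro k hk2 t ht
      have hk1 : 1 ≤ k := le_trans (by norm_num) hk2
      have hk0 : (0:ℝ) < (k:ℝ) := by exact_mod_cast hk1
      have htk : (0:ℝ) < t/k := div_pos ht hk0
      set q : ℝ≥0∞ := μF (Set.Ioi (M.a*(ε*t))) with hq
      set mk : ℝ≥0∞ := ENNReal.ofReal (t/k) * ∑ j ∈ Finset.Icc 1 (k-1),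
          μF (Set.Ioi (M.b * ((j:ℝ)*t/k))) with hmk
      have hsum_ne_top : (∑ j ∈ Finset.Icc 1 (k-1), μF (Set.Ioi (M.b * ((j:ℝ)*t/k)))) ≠ ⊤ :=
        (ENNReal.sum_lt_top.mpr fun j _ => measure_lt_top μF _).ne
      have hmk_ne_top : mk ≠ ⊤ := ENNReal.mul_ne_top ENNReal.ofReal_ne_top hsum_ne_top
      have hmk_toReal : mk.toReal = (t/k) * ∑ j ∈ Finset.Icc 1 (k-1),
          (μF (Set.Ioi (M.b * ((j:ℝ)*t/k)))).toReal := by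
        rw [hmk, ENNReal.toReal_mul, ENNReal.toReal_ofReal htk.le, ENNReal.toReal_sum
          (fun j _ => measure_ne_top μF _)]
      have hmk_pos : 0 < mk.toReal := by
        rw [hmk_toReal]
        refine mul_pos htk ?_
        refine Finset.sum_pos' (fun j _ => ENNReal.toReal_nonneg) ?_
        refine ⟨1, Finset.mem_Icc.mpr ⟨le_refl 1, by omega⟩, ?_⟩
        refine hIoipos _ (by positivity)
      have hmk_ne0 : mk ≠ 0 := by
        intro h0
        rw [h0] at hmk_pos
        simp at hmk_pos
      have hW : ∀ m, mk * ∑ n ∈ Finset.range m, M.P lam0 {ω | M.S n ω ≤ t}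
          ≤ ENNReal.ofReal (2*t) := fun m =>
        M.waldBound lam0 hlam0 μF hscaled t ht k hk1 m
      set Sig : ℝ≥0∞ := ∑' n, M.P lam0 {ω | M.S n ω ≤ t} with hSig
      have hSigbound : mk * Sig ≤ ENNReal.ofReal (2*t) := by
        rw [hSig, ← ENNReal.tsum_mul_left]
        refine htsum_le _ _ fun m => ?_
        rw [← Finset.mul_sum]
        exact hW m
      have hSig_ne_top : Sig ≠ ⊤ := by
        intro hT
        rw [hT, ENNReal.mul_top hmk_ne0] at hSigbound
        exact absurd (lt_of_le_of_lt hSigbound ENNReal.ofReal_lt_top) (lt_irrefl ⊤)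
      have hallS : M.P lam0 {ω | ∀ n, M.S n ω ≤ t} = 0 := by
        have hterm0 : Tendsto (fun n => M.P lam0 {ω | M.S n ω ≤ t}) atTop (𝓝 0) :=
          ENNReal.tendsto_atTop_zero_of_tsum_ne_top hSig_ne_top
        have hle : ∀ m, M.P lam0 {ω | ∀ n, M.S n ω ≤ t} ≤ M.P lam0 {ω | M.S m ω ≤ t} :=
          fun m => measure_mono fun ω hω => hω m
        exact le_antisymm (ge_of_tendsto hterm0 (Eventually.of_forall hle)) (zero_le)
      have hunion : M.P lam0 (bad t) ≤ q * Sig := by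
        calc M.P lam0 (bad t)
            ≤ M.P lam0 (⋃ n, {ω | M.S n ω ≤ t} ∩ {ω | ε*t < M.X n ω})
              + M.P lam0 {ω | ∀ n, M.S n ω ≤ t} := measure_union_le _ _
          _ = M.P lam0 (⋃ n, {ω | M.S n ω ≤ t} ∩ {ω | ε*t < M.X n ω}) := by
              rw [hallS, add_zero]
          _ ≤ ∑' n, M.P lam0 ({ω | M.S n ω ≤ t} ∩ {ω | ε*t < M.X n ω}) :=
              measure_iUnion_le _
          _ ≤ ∑' n, q * M.P lam0 {ω | M.S n ω ≤ t} := by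
              refine ENNReal.tsum_le_tsum fun n => ?_
              exact M.SnXn_upper lam0 hlam0 μF hscaled n t (ε*t) (by positivity)
          _ = q * Sig := ENNReal.tsum_mul_left
      -- pass to reals
      have hqSig_ne_top : q * Sig ≠ ⊤ := ENNReal.mul_ne_top (measure_ne_top μF _) hSig_ne_top
      have h1 : (M.P lam0 (bad t)).toReal ≤ q.toReal * Sig.toReal := by
        rw [← ENNReal.toReal_mul]
        exact ENNReal.toReal_mono hqSig_ne_top hunion
      have h2 : mk.toReal * Sig.toReal ≤ 2*t := by
        rw [← ENNReal.toReal_mul]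
        have := ENNReal.toReal_mono ENNReal.ofReal_ne_top hSigbound
        rwa [ENNReal.toReal_ofReal (by positivity)] at this
      have h3 : Sig.toReal ≤ 2*t / mk.toReal := by
        rw [le_div_iff₀ hmk_pos]
        linarith [h2]
      calc (M.P lam0 (bad t)).toReal ≤ q.toReal * Sig.toReal := h1
        _ ≤ q.toReal * (2*t / mk.toReal) :=
            mul_le_mul_of_nonneg_left h3 ENNReal.toReal_nonneg
        _ = ψ k t := by
            simp only [hψ]
            rw [← hmk_toReal]
            ring
    -- step B : the limit of ψ k
    have hψlim : ∀ k : ℕ, 2 ≤ k → Tendsto (ψ k) atTop (𝓝 ((2/(M.a*ε)) / Hk k)) := by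
      intro k hk2
      have hk1 : 1 ≤ k := le_trans (by norm_num) hk2
      have hk0 : (0:ℝ) < (k:ℝ) := by exact_mod_cast hk1
      have hc0 : (0:ℝ) < M.a * ε := by positivity
      set φ : ℝ → ℝ := fun t => ((2/(M.a*ε)) * (L ((M.a*ε)*t)/L t))
          / (∑ j ∈ Finset.Icc 1 (k-1), (1/(M.b*j)) * (L ((M.b*j/k)*t)/L t)) with hφ
      have hHkpos : 0 < Hk k := by
        rw [hHk]
        refine Finset.sum_pos' (fun j hj => ?_) ⟨1, Finset.mem_Icc.mpr ⟨le_refl 1, by omega⟩, by positivity⟩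
        have : (0:ℕ) ≤ j := Nat.zero_le j
        positivity
      have hφlim : Tendsto φ atTop (𝓝 ((2/(M.a*ε)) / Hk k)) := by
        have hnum : Tendsto (fun t => (2/(M.a*ε)) * (L ((M.a*ε)*t)/L t)) atTop
            (𝓝 ((2/(M.a*ε)) * 1)) := (hL.2 (M.a*ε) hc0).const_mul _
        have hden : Tendsto (fun t => ∑ j ∈ Finset.Icc 1 (k-1),
            (1/(M.b*j)) * (L ((M.b*j/k)*t)/L t)) atTop
            (𝓝 (∑ j ∈ Finset.Icc 1 (k-1), (1/(M.b*(j:ℝ))) * 1)) := by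
          refine tendsto_finset_sum _ fun j hj => ?_
          have hj1 : 1 ≤ j := (Finset.mem_Icc.mp hj).1
          have hcj : (0:ℝ) < M.b*j/k := by
            have : (1:ℝ) ≤ (j:ℝ) := by exact_mod_cast hj1
            positivity
          exact (hL.2 (M.b*j/k) hcj).const_mul _
        have hHk1 : ∑ j ∈ Finset.Icc 1 (k-1), (1/(M.b*(j:ℝ))) * 1 = Hk k := by
          rw [hHk]; exact Finset.sum_congr rfl fun j _ => by rw [mul_one]
        rw [hHk1] at hden
        have := hnum.div hden (ne_of_gt hHkpos)
        rwa [mul_one] at this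
      refine hφlim.congr' ?_
      filter_upwards [eventually_gt_atTop (0:ℝ)] with t ht
      have hLt : 0 < L t := hL.1 t ht
      -- rewrite ψ k t into φ t
      have hq' : (μF (Set.Ioi (M.a*(ε*t)))).toReal = L ((M.a*ε)*t) / ((M.a*ε)*t) := by
        rw [show M.a*(ε*t) = (M.a*ε)*t by ring]
        exact hIoiL _ (by positivity)
      have hden' : ∀ j ∈ Finset.Icc 1 (k-1),
          (μF (Set.Ioi (M.b * ((j:ℝ)*t/k)))).toReal = L ((M.b*j/k)*t) / ((M.b*j/k)*t) := by
        intro j hj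
        have hj1 : 1 ≤ j := (Finset.mem_Icc.mp hj).1
        have hj1' : (1:ℝ) ≤ (j:ℝ) := by exact_mod_cast hj1
        rw [show M.b * ((j:ℝ)*t/k) = (M.b*j/k)*t by ring]
        exact hIoiL _ (by positivity)
      simp only [hφ, hψ]
      rw [hq', Finset.sum_congr rfl hden']
      have hLpos : ∀ j ∈ Finset.Icc 1 (k-1), 0 < L ((M.b*j/k)*t) := by
        intro j hj
        have hj1' : (1:ℝ) ≤ (j:ℝ) := by exact_mod_cast (Finset.mem_Icc.mp hj).1
        exact hL.1 _ (by positivity)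
      -- pure algebra
      have e1 : (t/k) * ∑ j ∈ Finset.Icc 1 (k-1), L ((M.b*j/k)*t) / ((M.b*j/k)*t)
          = ∑ j ∈ Finset.Icc 1 (k-1), L ((M.b*j/k)*t) / (M.b*j) := by
        rw [Finset.mul_sum]
        refine Finset.sum_congr rfl fun j hj => ?_
        have hj1' : (1:ℝ) ≤ (j:ℝ) := by exact_mod_cast (Finset.mem_Icc.mp hj).1
        field_simp
      have e2 : ∑ j ∈ Finset.Icc 1 (k-1), (1/(M.b*j)) * (L ((M.b*j/k)*t)/L t)
          = (∑ j ∈ Finset.Icc 1 (k-1), L ((M.b*j/k)*t) / (M.b*j)) / L t := by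
        rw [Finset.sum_div]
        refine Finset.sum_congr rfl fun j hj => ?_
        ring
      rw [e2, e1]
      set A1 : ℝ := L ((M.a*ε)*t) with hA1
      set B1 : ℝ := ∑ j ∈ Finset.Icc 1 (k-1), L ((M.b*j/k)*t) / (M.b*j) with hB1
      have hB1pos : 0 < B1 := by
        rw [hB1]
        refine Finset.sum_pos (fun j hj => ?_) ⟨1, Finset.mem_Icc.mpr ⟨le_refl 1, by omega⟩⟩
        have hj1' : (1:ℝ) ≤ (j:ℝ) := by exact_mod_cast (Finset.mem_Icc.mp hj).1
        exact div_pos (hLpos j hj) (by positivity)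
      have hB1ne : B1 ≠ 0 := ne_of_gt hB1pos
      have hLtne : L t ≠ 0 := ne_of_gt hLt
      have htne : t ≠ 0 := ne_of_gt ht
      have haεne : M.a * ε ≠ 0 := ne_of_gt hc0
      field_simp
    -- step C : assemble
    rw [Metric.tendsto_nhds]
    intro η hη
    have h2aε : (0:ℝ) < 2/(M.a*ε) := by positivity
    have hHktop : Tendsto Hk atTop atTop := by
      have h1 : Tendsto (fun m : ℕ => ∑ i ∈ Finset.range m, (1/((i:ℝ)+1))) atTop atTop :=
        Real.tendsto_sum_range_one_div_nat_succ_atTop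
      have h2 : Tendsto (fun k : ℕ => ∑ i ∈ Finset.range (k-1), (1/((i:ℝ)+1))) atTop atTop :=
        h1.comp (tendsto_sub_atTop_nat 1)
      have h3 : Tendsto (fun k : ℕ => (1/M.b) * ∑ i ∈ Finset.range (k-1), (1/((i:ℝ)+1)))
          atTop atTop := h2.const_mul_atTop (by positivity)
      have hreidx : ∀ n : ℕ, ∑ j ∈ Finset.Icc 1 n, (1:ℝ)/(M.b*j)
          = ∑ i ∈ Finset.range n, (1/M.b) * (1/((i:ℝ)+1)) := by
        intro n
        induction n with
        | zero => simp
        | succ n ih =>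
          rw [Finset.sum_Icc_succ_top (by omega), ih, Finset.sum_range_succ]
          congr 1
          push_cast
          rw [one_div, mul_inv, ← one_div, ← one_div, div_mul_div_comm, one_mul]
      refine h3.congr fun k => ?_
      simp only [hHk]
      rw [hreidx (k-1), Finset.mul_sum]
    obtain ⟨k, hkH, hk2⟩ : ∃ k : ℕ, Hk k ≥ 2/(M.a*ε)/η + 1 ∧ 2 ≤ k := by
      have := (hHktop.eventually_ge_atTop (2/(M.a*ε)/η + 1)).and (eventually_ge_atTop 2)
      exact this.exists
    have hHkpos : 0 < Hk k := by
      have : (0:ℝ) < 2/(M.a*ε)/η + 1 := by positivity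
      linarith
    have hlt : 2/(M.a*ε) / Hk k < η := by
      rw [div_lt_iff₀ hHkpos]
      have h5 : 2/(M.a*ε)/η < Hk k := by linarith
      rw [div_lt_iff₀ hη] at h5
      linarith
    have hev1 : ∀ᶠ t in atTop, ψ k t < η := (hψlim k hk2).eventually_lt_const hlt
    filter_upwards [hev1, eventually_gt_atTop (0:ℝ)] with t hψt ht
    rw [Real.dist_eq, sub_zero, abs_of_nonneg ENNReal.toReal_nonneg]
    exact lt_of_le_of_lt (boundA k hk2 t ht) hψt
  -- step D : inclusion of the events
  have hNfacts : ∀ t : ℝ, 0 < t → ∀ ω, (∃ n, t < M.S n ω) →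
      M.S (M.N t ω - 1) ω ≤ t ∧
      M.S (M.N t ω) ω = M.S (M.N t ω - 1) ω + M.X (M.N t ω - 1) ω ∧
      t < M.S (M.N t ω) ω := by
    intro t ht ω hE
    have hNmem : t < M.S (M.N t ω) ω := Nat.sInf_mem hE
    have hN0 : M.N t ω ≠ 0 := by
      intro h0
      rw [h0] at hNmem
      simp only [MarkovRenewalProcess.S, Finset.range_zero, Finset.sum_empty] at hNmem
      linarith
    have hpred : ¬ t < M.S (M.N t ω - 1) ω :=
      Nat.notMem_of_lt_sInf (Nat.pred_lt hN0)
    refine ⟨le_of_not_gt hpred, ?_, hNmem⟩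
    have hsucc : M.N t ω = (M.N t ω - 1) + 1 := by omega
    conv_lhs => rw [hsucc]
    simp only [MarkovRenewalProcess.S]
    rw [Finset.sum_range_succ]
  have hinclY : ∀ ε : ℝ, 0 < ε → ∀ t : ℝ, 0 < t → {ω | ε < |M.Yage t ω / t|} ⊆
      (⋃ n, {ω | M.S n ω ≤ t} ∩ {ω | ε*t < M.X n ω}) ∪ {ω | ∀ n, M.S n ω ≤ t} := by
    intro ε hε t ht ω hω
    by_cases hE : ∃ n, t < M.S n ω
    · left
      obtain ⟨hS1, hS2, hS3⟩ := hNfacts t ht ω hE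
      simp only [Set.mem_setOf_eq, MarkovRenewalProcess.Yage] at hω
      have hY0 : 0 ≤ (t - M.S (M.N t ω - 1) ω) / t := by
        apply div_nonneg _ ht.le
        linarith
      rw [abs_of_nonneg hY0] at hω
      have hεt : ε * t < t - M.S (M.N t ω - 1) ω := by
        rw [lt_div_iff₀ ht] at hω
        linarith
      refine Set.mem_iUnion.mpr ⟨M.N t ω - 1, ⟨hS1, ?_⟩⟩
      simp only [Set.mem_setOf_eq]
      linarith
    · right
      intro n
      exact le_of_not_gt fun h => hE ⟨n, h⟩
  have hinclZ : ∀ ε : ℝ, 0 < ε → ∀ t : ℝ, 0 < t → {ω | ε < |M.Zres t ω / t|} ⊆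
      (⋃ n, {ω | M.S n ω ≤ t} ∩ {ω | ε*t < M.X n ω}) ∪ {ω | ∀ n, M.S n ω ≤ t} := by
    intro ε hε t ht ω hω
    by_cases hE : ∃ n, t < M.S n ω
    · left
      obtain ⟨hS1, hS2, hS3⟩ := hNfacts t ht ω hE
      simp only [Set.mem_setOf_eq, MarkovRenewalProcess.Zres] at hω
      have hZ0 : 0 ≤ (M.S (M.N t ω) ω - t) / t := by
        apply div_nonneg _ ht.le
        linarith
      rw [abs_of_nonneg hZ0] at hω
      have hεt : ε * t < M.S (M.N t ω) ω - t := by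
        rw [lt_div_iff₀ ht] at hω
        linarith
      refine Set.mem_iUnion.mpr ⟨M.N t ω - 1, ⟨hS1, ?_⟩⟩
      simp only [Set.mem_setOf_eq]
      linarith
    · right
      intro n
      exact le_of_not_gt fun h => hE ⟨n, h⟩
  constructor
  · intro ε hε
    refine tendsto_of_tendsto_of_tendsto_of_le_of_le' tendsto_const_nhds (master ε hε)
      (Eventually.of_forall fun t => ENNReal.toReal_nonneg) ?_
    filter_upwards [eventually_gt_atTop (0:ℝ)] with t ht
    exact ENNReal.toReal_mono (measure_ne_top _ _) (measure_mono (hinclY ε hε t ht))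
  · intro ε hε
    refine tendsto_of_tendsto_of_tendsto_of_le_of_le' tendsto_const_nhds (master ε hε)
      (Eventually.of_forall fun t => ENNReal.toReal_nonneg) ?_
    filter_upwards [eventually_gt_atTop (0:ℝ)] with t ht
    exact ENNReal.toReal_mono (measure_ne_top _ _) (measure_mono (hinclZ ε hε t ht))
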